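/- Let V₁, …, V_m be D×D complex unitary matrices. Then the following are equivalent: (i) for every real unit vector ψ ∈ ℂ^D, the vectors V₁ψ, …, V_mψ are pairwise orthogonal; (ii) for every pair j ≠ j', the matrix V_j† V_{j'} is skew-symmetric, i.e., (V_j† V_{j'})ᵀ = -(V_j† V_{j'}). In particular, when m = D, condition (ii) holds if and only if (V_j ψ)_{j=1}^D is an orthonormal basis of ℂ^D for every real unit vector ψ (a state-independent basis construction on the real state space). -/

import Mathlib

open Matrix

/-- A family of vectors in `ℂ^κ` forms an orthonormal basis: the vectors are
pairwise orthogonal unit vectors and they span the whole space. -/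
def IsONBasis {ι κ : Type*} [Fintype ι] [DecidableEq ι] [Fintype κ] (v : ι → κ → ℂ) : Prop :=
  (∀ j j', star (v j) ⬝ᵥ v j' = if j = j' then 1 else 0) ∧
    Submodule.span ℂ (Set.range v) = ⊤

lemma star_real' {D : ℕ} (ψ : Fin D → ℂ) (h : ∀ i, (ψ i).im = 0) : star ψ = ψ := by
  funext i
  simp [Complex.ext_iff, Complex.conj_re, Complex.conj_im, h i]

lemma quad_iff' {D : ℕ} (A : Matrix (Fin D) (Fin D) ℂ) :
    (∀ ψ : Fin D → ℂ, (∀ i, (ψ i).im = 0) → star ψ ⬝ᵥ ψ = 1 →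
      star ψ ⬝ᵥ (A *ᵥ ψ) = 0) ↔ Aᵀ = -A := by
  constructor
  · intro h
    have hdiag : ∀ i, A i i = 0 := by
      intro i
      have him : ∀ l, ((Pi.single i 1 : Fin D → ℂ) l).im = 0 := by
        intro l
        rcases eq_or_ne l i with rfl | hl
        · simp
        · simp [Pi.single_apply, hl]
      have hs := star_real' _ him
      have h1 := h (Pi.single i 1) him (by rw [hs]; simp [single_dotProduct, Pi.single_apply])
      rw [hs] at h1
      simpa [single_dotProduct, mulVec_single] using h1
    have key : ∀ i k, i ≠ k → A i k + A k i = 0 := by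
      intro i k hik
      set c : ℂ := (Real.sqrt 2 : ℂ)⁻¹ with hc
      have hcim : c.im = 0 := by simp [hc]
      have hc2 : (starRingEnd ℂ) c * c = 1/2 := by
        rw [Complex.conj_eq_iff_im.mpr hcim, hc, ← mul_inv, ← Complex.ofReal_mul,
          Real.mul_self_sqrt (by norm_num : (0:ℝ) ≤ 2)]
        norm_num
      set φ : Fin D → ℂ := Pi.single i 1 + Pi.single k 1 with hφ
      set ψ : Fin D → ℂ := c • φ with hψ
      have hφim : ∀ l, (φ l).im = 0 := by
        intro l
        simp only [hφ, Pi.add_apply, Pi.single_apply, Complex.add_im]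
        split_ifs <;> simp
      have him : ∀ l, (ψ l).im = 0 := by
        intro l; simp [hψ, Complex.mul_im, hcim, hφim l]
      have hφs := star_real' _ hφim
      have hφφ : φ ⬝ᵥ φ = 2 := by
        simp [hφ, add_dotProduct, dotProduct_add, single_dotProduct, Pi.single_apply, hik,
          hik.symm]
        norm_num
      have hunit : star ψ ⬝ᵥ ψ = 1 := by
        simp only [hψ, star_smul, smul_dotProduct, dotProduct_smul, smul_eq_mul, hφs, hφφ]
        rw [RCLike.star_def]
        linear_combination 2 * hc2
      have h1 := h ψ him hunit
      rw [hψ, star_smul, smul_dotProduct, mulVec_smul, dotProduct_smul, RCLike.star_def, hφs] at h1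
      have hq : φ ⬝ᵥ (A *ᵥ φ) = A i k + A k i := by
        simp [hφ, add_dotProduct, dotProduct_add, mulVec_add, mulVec_single, single_dotProduct,
          hdiag]
        ring
      rw [smul_eq_mul, smul_eq_mul, ← mul_assoc, hc2, hq] at h1
      linear_combination 2 * h1
    ext i k
    simp only [transpose_apply, Matrix.neg_apply]
    rcases eq_or_ne i k with rfl | hik
    · simp [hdiag i]
    · have := key k i (Ne.symm hik)
      linear_combination this
  · intro hA ψ him hunit
    rw [star_real' ψ him]
    have h1 : ψ ⬝ᵥ (A *ᵥ ψ) = -(ψ ⬝ᵥ (A *ᵥ ψ)) := by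
      calc ψ ⬝ᵥ (A *ᵥ ψ) = (Aᵀ *ᵥ ψ) ⬝ᵥ ψ := by rw [dotProduct_mulVec, ← mulVec_transpose]
        _ = -((A *ᵥ ψ) ⬝ᵥ ψ) := by rw [hA, neg_mulVec, neg_dotProduct]
        _ = -(ψ ⬝ᵥ (A *ᵥ ψ)) := by rw [dotProduct_comm]
    linear_combination h1 / 2

lemma dot_conj' {D : ℕ} (M N : Matrix (Fin D) (Fin D) ℂ) (ψ : Fin D → ℂ) :
    star (M *ᵥ ψ) ⬝ᵥ (N *ᵥ ψ) = star ψ ⬝ᵥ ((Mᴴ * N) *ᵥ ψ) := by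
  rw [star_mulVec, dotProduct_mulVec, dotProduct_mulVec, vecMul_vecMul]

lemma row_span_top {D : ℕ} (M : Matrix (Fin D) (Fin D) ℂ) (hM : M * Mᴴ = 1) :
    Submodule.span ℂ (Set.range (fun j => M j)) = ⊤ := by
  have hMM : Mᴴ * M = 1 := mul_eq_one_comm.mp hM
  rw [eq_top_iff]
  intro x _
  rw [Submodule.mem_span_range_iff_exists_fun ℂ]
  refine ⟨(Mᴴ)ᵀ *ᵥ x, ?_⟩
  have hsum : ∀ c : Fin D → ℂ, (∑ j, c j • M j) = Mᵀ *ᵥ c := by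
    intro c
    ext i
    simp [mulVec, dotProduct, Finset.sum_apply, mul_comm]
  rw [hsum, mulVec_mulVec, ← transpose_mul, hMM]
  simp

/-- For `D×D` unitaries `V₁, …, V_m`: the images `V_j ψ` are pairwise orthogonal for every
real unit vector `ψ` iff `V_j† V_{j'}` is skew-symmetric for all `j ≠ j'`; and when `m = D`
this is further equivalent to `(V_j ψ)_j` being an orthonormal basis of `ℂ^D` for every real
unit vector `ψ` (a state-independent basis construction on the real state space). -/
theorem stmt6 (D m : ℕ) (V : Fin m → Matrix (Fin D) (Fin D) ℂ)
    (hV : ∀ j, V j ∈ Matrix.unitaryGroup (Fin D) ℂ) :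
    ((∀ ψ : Fin D → ℂ, (∀ i, (ψ i).im = 0) → star ψ ⬝ᵥ ψ = 1 →
        ∀ j j', j ≠ j' → star ((V j) *ᵥ ψ) ⬝ᵥ ((V j') *ᵥ ψ) = 0) ↔
      (∀ j j', j ≠ j' → ((V j)ᴴ * V j')ᵀ = -((V j)ᴴ * V j'))) ∧
    (m = D →
      ((∀ j j', j ≠ j' → ((V j)ᴴ * V j')ᵀ = -((V j)ᴴ * V j')) ↔
        (∀ ψ : Fin D → ℂ, (∀ i, (ψ i).im = 0) → star ψ ⬝ᵥ ψ = 1 →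
          IsONBasis (fun j => (V j) *ᵥ ψ)))) := by
  have part1 : (∀ ψ : Fin D → ℂ, (∀ i, (ψ i).im = 0) → star ψ ⬝ᵥ ψ = 1 →
        ∀ j j', j ≠ j' → star ((V j) *ᵥ ψ) ⬝ᵥ ((V j') *ᵥ ψ) = 0) ↔
      (∀ j j', j ≠ j' → ((V j)ᴴ * V j')ᵀ = -((V j)ᴴ * V j')) := by
    constructor
    · intro h j j' hjj'
      refine (quad_iff' _).mp (fun ψ h1 h2 => ?_)
      rw [← dot_conj']
      exact h ψ h1 h2 j j' hjj'
    · intro h ψ h1 h2 j j' hjj'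
      rw [dot_conj']
      exact (quad_iff' _).mpr (h j j' hjj') ψ h1 h2
  refine ⟨part1, fun hm => ?_⟩
  subst hm
  constructor
  · intro hskew ψ h1 h2
    have horth : ∀ j j', star ((V j) *ᵥ ψ) ⬝ᵥ ((V j') *ᵥ ψ) = if j = j' then 1 else 0 := by
      intro j j'
      rcases eq_or_ne j j' with rfl | hjj'
      · have hu : (V j)ᴴ * V j = 1 := Matrix.mem_unitaryGroup_iff'.mp (hV j)
        rw [dot_conj', hu, one_mulVec, h2, if_pos rfl]
      · rw [if_neg hjj']
        exact part1.mpr hskew ψ h1 h2 j j' hjj'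
    refine ⟨horth, ?_⟩
    have hMH : (Matrix.of fun j i => ((V j) *ᵥ ψ) i) *
        (Matrix.of fun j i => ((V j) *ᵥ ψ) i)ᴴ = 1 := by
      ext j j'
      have hcc := congrArg (starRingEnd ℂ) (horth j j')
      simp only [dotProduct, Pi.star_apply, RCLike.star_def, map_sum, _root_.map_mul,
        Complex.conj_conj] at hcc
      simp only [Matrix.mul_apply, conjTranspose_apply, Matrix.of_apply, Matrix.one_apply,
        RCLike.star_def]
      rw [hcc]
      split_ifs <;> simp
    exact row_span_top _ hMH
  · intro hONB
    refine part1.mp (fun ψ h1 h2 j j' hjj' => ?_)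
    have := (hONB ψ h1 h2).1 j j'
    simpa [hjj'] using this
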